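/- Let g : ℕ and d : Fin g → ℕ with 1 ≤ d i for all i, K := ∏ᵢ ZMod (2·d i), Z₂ := {x ∈ K : 2·x = 0}, D := {2·x : x ∈ K}, Z₂' := Z₂ ∩ D, and s := #{i : d i odd}. Then the quotient group D / Z₂' has exactly (∏ᵢ d i) / 2^(g−s) elements. -/

import Mathlib

open Finset

/-- The doubling homomorphism `x ↦ 2·x` of an additive commutative group. -/
def doubleHom (K : Type*) [AddCommGroup K] : K →+ K where
  toFun x := 2 • x
  map_zero' := smul_zero 2
  map_add' x y := smul_add 2 x y

lemma double_mem_iff {n : ℕ} (a : ZMod n) :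
    (∃ b : ZMod n, 2 • b = a) ↔ a ∈ AddSubgroup.zmultiples (2 : ZMod n) := by
  constructor
  · rintro ⟨b, rfl⟩
    by_cases hn : n = 0
    · subst hn
      exact ⟨(b : ℤ), by simp [nsmul_eq_mul, zsmul_eq_mul, smul_eq_mul, mul_comm, ZMod.intCast_cast]; rfl⟩
    · haveI : NeZero n := ⟨hn⟩
      refine ⟨(b.val : ℤ), ?_⟩
      simp [zsmul_eq_mul, nsmul_eq_mul, ZMod.natCast_zmod_val, mul_comm]
  · rintro ⟨k, rfl⟩
    exact ⟨k • (1 : ZMod n), by rw [smul_comm]; norm_num⟩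

lemma card_double_range {d : ℕ} (hd : 1 ≤ d) :
    Nat.card {a : ZMod (2 * d) // ∃ b, 2 • b = a} = d := by
  haveI : NeZero (2 * d) := ⟨by omega⟩
  rw [Nat.card_congr (Equiv.subtypeEquivRight fun a => double_mem_iff a)]
  have h2 : (2 : ZMod (2 * d)) = ((2 : ℕ) : ZMod (2 * d)) := by norm_cast
  rw [Nat.card_zmultiples, h2, ZMod.addOrderOf_coe 2 (by omega)]
  have hg : Nat.gcd (2 * d) 2 = 2 := by
    have := Nat.gcd_mul_left 2 d 1
    simpa using this
  rw [hg, Nat.mul_div_cancel_left d (by norm_num)]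

lemma nsmul_zmod_eq {n : ℕ} [NeZero n] (k : ℕ) (a : ZMod n) :
    k • a = ((k * a.val : ℕ) : ZMod n) := by
  rw [nsmul_eq_mul, Nat.cast_mul, ZMod.natCast_zmod_val]

lemma card_tors_inter {d : ℕ} (hd : 1 ≤ d) :
    Nat.card {a : ZMod (2 * d) // 2 • a = 0 ∧ ∃ b, 2 • b = a}
      = if Odd d then 1 else 2 := by
  haveI : NeZero (2 * d) := ⟨by omega⟩
  by_cases hodd : Odd d
  · rw [if_pos hodd]
    have huniq : ∀ x : {a : ZMod (2 * d) // 2 • a = 0 ∧ ∃ b, 2 • b = a},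
        x = ⟨0, by simp, 0, by simp⟩ := by
      rintro ⟨a, ha, b, hb⟩
      ext
      have h4 : ((4 * b.val : ℕ) : ZMod (2 * d)) = 0 := by
        rw [← nsmul_zmod_eq]
        calc (4 : ℕ) • b = 2 • (2 • b) := by rw [smul_smul]; norm_num
        _ = 0 := by rw [hb, ha]
      rw [ZMod.natCast_eq_zero_iff] at h4
      obtain ⟨c, hc⟩ := h4
      have hc2 : 2 * (2 * b.val) = 2 * (d * c) := by
        calc 2 * (2 * b.val) = 4 * b.val := by ring
        _ = 2 * d * c := hc
        _ = 2 * (d * c) := by ring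
      have hdvd : d ∣ 2 * b.val := ⟨c, Nat.eq_of_mul_eq_mul_left two_pos hc2⟩
      have hdvd' : d ∣ b.val :=
        (Nat.Coprime.dvd_of_dvd_mul_left (Nat.coprime_two_right.mpr hodd) hdvd)
      obtain ⟨m, hm⟩ := hdvd'
      show a = 0
      rw [← hb, nsmul_zmod_eq, ZMod.natCast_eq_zero_iff, hm]
      exact ⟨m, by ring⟩
    haveI : Unique {a : ZMod (2 * d) // 2 • a = 0 ∧ ∃ b, 2 • b = a} :=
      ⟨⟨⟨0, by simp, 0, by simp⟩⟩, huniq⟩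
    exact Nat.card_unique
  · rw [if_neg hodd]
    have heven : 2 ∣ d := (Nat.not_odd_iff_even.mp hodd).two_dvd
    have hne : ((d : ℕ) : ZMod (2 * d)) ≠ 0 := by
      rw [Ne, ZMod.natCast_eq_zero_iff]
      intro h
      have := Nat.le_of_dvd (by omega) h
      omega
    have hiff : ∀ a : ZMod (2 * d),
        (2 • a = 0 ∧ ∃ b, 2 • b = a) ↔ a ∈ ({0, ((d : ℕ) : ZMod (2 * d))} : Set _) := by
      intro a
      constructor
      · rintro ⟨ha, -⟩
        rw [nsmul_zmod_eq, ZMod.natCast_eq_zero_iff] at ha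
        obtain ⟨c, hc⟩ := ha
        have hc2 : 2 * a.val = 2 * (d * c) := by
          calc 2 * a.val = 2 * d * c := hc
          _ = 2 * (d * c) := by ring
        have hdvd : d ∣ a.val := ⟨c, Nat.eq_of_mul_eq_mul_left two_pos hc2⟩
        obtain ⟨m, hm⟩ := hdvd
        have hlt : a.val < 2 * d := ZMod.val_lt a
        have : m = 0 ∨ m = 1 := by
          rcases Nat.lt_or_ge m 2 with h | h
          · omega
          · exfalso; nlinarith
        rcases this with rfl | rfl
        · left
          rw [← ZMod.natCast_zmod_val a, hm]
          simp
        · right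
          rw [← ZMod.natCast_zmod_val a, hm]
          simp
      · rintro (rfl | rfl)
        · exact ⟨by simp, 0, by simp⟩
        · refine ⟨?_, ((d / 2 : ℕ) : ZMod (2 * d)), ?_⟩
          · rw [show (2 : ℕ) • ((d : ℕ) : ZMod (2 * d)) = ((2 * d : ℕ) : ZMod (2 * d)) by
              rw [nsmul_eq_mul]; push_cast; ring]
            simp [ZMod.natCast_self]
          · rw [show (2 : ℕ) • ((d / 2 : ℕ) : ZMod (2 * d)) = ((2 * (d / 2) : ℕ) : ZMod (2 * d)) by
              rw [nsmul_eq_mul]; push_cast; ring]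
            congr 1
            omega
    rw [Nat.card_congr (Equiv.subtypeEquivRight hiff)]
    rw [Nat.card_coe_set_eq, Set.ncard_pair (Ne.symm hne)]

/-- For `K := ∏ i, ZMod (2·d i)` with all `d i ≥ 1`, letting `Z₂` be the 2-torsion
subgroup, `D` the subgroup of doubles, `Z₂' := Z₂ ∩ D`, and `s` the number of odd
`d i`, the quotient `D ⧸ Z₂'` has exactly `(∏ i, d i) / 2^(g-s)` elements. -/
theorem card_quotient_doubles_by_inter (g : ℕ) (d : Fin g → ℕ) (hd : ∀ i, 1 ≤ d i) :
    Nat.card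
        ((doubleHom (∀ i, ZMod (2 * d i))).range ⧸
          (((doubleHom (∀ i, ZMod (2 * d i))).ker ⊓
              (doubleHom (∀ i, ZMod (2 * d i))).range).addSubgroupOf
            (doubleHom (∀ i, ZMod (2 * d i))).range))
      = (∏ i, d i) / 2 ^ (g - (Finset.univ.filter fun i => Odd (d i)).card) := by
  haveI : ∀ i, NeZero (2 * d i) := fun i => ⟨by have := hd i; omega⟩
  set φ := doubleHom (∀ i, ZMod (2 * d i)) with hφ
  have hφ_apply : ∀ x, φ x = 2 • x := fun _ => rfl
  -- card of the range
  have hrange_iff : ∀ x : ∀ i, ZMod (2 * d i),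
      x ∈ φ.range ↔ ∀ i, ∃ b : ZMod (2 * d i), 2 • b = x i := by
    intro x
    rw [AddMonoidHom.mem_range]
    constructor
    · rintro ⟨y, rfl⟩ i
      exact ⟨y i, rfl⟩
    · intro h
      obtain ⟨f, hf⟩ := Classical.skolem.mp h
      exact ⟨f, funext hf⟩
  have hR : Nat.card φ.range = ∏ i, d i := by
    rw [Nat.card_congr (Equiv.subtypeEquivRight hrange_iff),
      Nat.card_congr (Equiv.subtypePiEquivPi
        (p := fun i (b : ZMod (2 * d i)) => ∃ c, 2 • c = b)), Nat.card_pi]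
    exact Finset.prod_congr rfl fun i _ => card_double_range (hd i)
  -- card of the intersection
  have hinter_iff : ∀ x : ∀ i, ZMod (2 * d i),
      x ∈ φ.ker ⊓ φ.range ↔
        ∀ i, 2 • x i = 0 ∧ ∃ b : ZMod (2 * d i), 2 • b = x i := by
    intro x
    rw [AddSubgroup.mem_inf, AddMonoidHom.mem_ker, hrange_iff, hφ_apply, funext_iff,
      ← forall_and]
    exact forall_congr' fun i => by simp [Pi.smul_apply]
  have hI : Nat.card (φ.ker ⊓ φ.range : AddSubgroup _)
      = 2 ^ (g - (Finset.univ.filter fun i => Odd (d i)).card) := by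
    rw [Nat.card_congr (Equiv.subtypeEquivRight hinter_iff),
      Nat.card_congr (Equiv.subtypePiEquivPi
        (p := fun i (b : ZMod (2 * d i)) => 2 • b = 0 ∧ ∃ c, 2 • c = b)), Nat.card_pi]
    have : ∀ i : Fin g, Nat.card {b : ZMod (2 * d i) // 2 • b = 0 ∧ ∃ c, 2 • c = b}
        = if Odd (d i) then 1 else 2 := fun i => card_tors_inter (hd i)
    rw [Finset.prod_congr rfl fun i _ => this i, Finset.prod_ite, Finset.prod_const,
      Finset.prod_const, one_pow, one_mul]
    congr 1
    have := Finset.card_filter_add_card_filter_not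
      (s := (Finset.univ : Finset (Fin g))) (p := fun i => Odd (d i))
    simp only [Finset.card_univ, Fintype.card_fin] at this ⊢
    omega
  -- assemble
  have key := AddSubgroup.card_eq_card_quotient_mul_card_addSubgroup
    ((φ.ker ⊓ φ.range).addSubgroupOf φ.range)
  have hsub : Nat.card ((φ.ker ⊓ φ.range).addSubgroupOf φ.range)
      = 2 ^ (g - (Finset.univ.filter fun i => Odd (d i)).card) := by
    rw [Nat.card_congr (AddSubgroup.addSubgroupOfEquivOfLe inf_le_right).toEquiv, hI]
  rw [hR, hsub] at key
  exact (Nat.div_eq_of_eq_mul_left (by positivity) key).symm
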